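/- arXiv:2101.10147 — 5 statements merged into one kernel-verified Lean document; each statement's English description precedes it below -/
import Mathlib

section
/- For all natural numbers a, the integral ∫_0^∞ e^{-x} L_a(x)^2 dx equals 1, where L_a is the simple Laguerre polynomial of degree a. -/
open MeasureTheory Set Finset Nat

/-- The simple Laguerre polynomial `L_a(x) = ∑_{α=0}^{a} (-1)^α C(a,α) x^α / α!`. -/
noncomputable def laguerre (a : ℕ) (x : ℝ) : ℝ :=
  ∑ α ∈ Finset.range (a + 1), (-1 : ℝ) ^ α * (Nat.choose a α : ℝ) * x ^ α / (Nat.factorial α : ℝ)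

lemma integrable_pow_exp (n : ℕ) :
    IntegrableOn (fun x : ℝ => Real.exp (-x) * x ^ n) (Set.Ioi 0) := by
  have h := Real.GammaIntegral_convergent (s := (n : ℝ) + 1) (by positivity)
  refine h.congr_fun (fun x hx => ?_) measurableSet_Ioi
  simp only [add_sub_cancel_right, Real.rpow_natCast]

lemma integral_pow_exp (n : ℕ) :
    ∫ x in Set.Ioi (0 : ℝ), Real.exp (-x) * x ^ n = (n ! : ℝ) := by
  rw [← Real.Gamma_nat_eq_factorial,
    Real.Gamma_eq_integral (by positivity : (0:ℝ) < (n : ℝ) + 1)]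
  refine setIntegral_congr_fun measurableSet_Ioi (fun x hx => ?_)
  rw [add_sub_cancel_right, Real.rpow_natCast]

lemma T_eval (a k : ℕ) (hk : k ≤ a) :
    ∑ i ∈ range (a + 1), (-1 : ℝ) ^ i * (a.choose i : ℝ) * (i.choose k : ℝ)
      = if k = a then (-1 : ℝ) ^ a else 0 := by
  have hsplit : range (a + 1) = Finset.Ico 0 k ∪ Finset.Ico k (a + 1) := by
    rw [Finset.range_eq_Ico, Finset.Ico_union_Ico_eq_Ico (Nat.zero_le _) (by omega)]
  rw [hsplit, Finset.sum_union (by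
    refine Finset.disjoint_left.2 fun x hx hx' => ?_
    simp only [Finset.mem_Ico] at hx hx'; omega)]
  have h1 : ∑ i ∈ Finset.Ico 0 k, (-1 : ℝ) ^ i * (a.choose i : ℝ) * (i.choose k : ℝ) = 0 := by
    refine Finset.sum_eq_zero fun i hi => ?_
    simp only [Finset.mem_Ico] at hi
    rw [Nat.choose_eq_zero_of_lt hi.2]
    simp
  rw [h1, zero_add, Finset.sum_Ico_eq_sum_range]
  have h2 : ∀ m ∈ range (a + 1 - k),
      (-1 : ℝ) ^ (k + m) * (a.choose (k + m) : ℝ) * ((k + m).choose k : ℝ)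
        = ((-1 : ℝ) ^ k * (a.choose k : ℝ)) * ((-1 : ℝ) ^ m * ((a - k).choose m : ℝ)) := by
    intro m hm
    simp only [Finset.mem_range] at hm
    have hle : k + m ≤ a := by omega
    have hc : a.choose (k + m) * (k + m).choose k = a.choose k * (a - k).choose m := by
      have := Nat.choose_mul (n := a) (Nat.le_add_right k m)
      simpa using this
    have hc' : ((a.choose (k + m) : ℝ)) * ((k + m).choose k : ℝ)
        = (a.choose k : ℝ) * ((a - k).choose m : ℝ) := by exact_mod_cast hc
    rw [pow_add]
    linear_combination ((-1 : ℝ) ^ k * (-1 : ℝ) ^ m) * hc'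
  rw [Finset.sum_congr rfl h2, ← Finset.mul_sum]
  have halt : ∑ m ∈ range (a + 1 - k), (-1 : ℝ) ^ m * ((a - k).choose m : ℝ)
      = if a - k = 0 then 1 else 0 := by
    have he : a + 1 - k = (a - k) + 1 := by omega
    rw [he]
    by_cases h0 : a - k = 0
    · simp [h0]
    · rw [if_neg h0]
      exact_mod_cast Int.alternating_sum_range_choose_of_ne h0
  rw [halt]
  by_cases hka : k = a
  · subst hka; simp
  · have : a - k ≠ 0 := by omega
    simp [hka, this]

lemma choose_vander (a i j : ℕ) (hi : i ≤ a) :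
    ((i + j).choose i : ℝ) = ∑ k ∈ range (a + 1), (i.choose k : ℝ) * (j.choose k : ℝ) := by
  have hnat : (i + j).choose i = ∑ k ∈ range (a + 1), i.choose k * j.choose k := by
    rw [Nat.add_choose_eq]
    rw [Finset.Nat.sum_antidiagonal_eq_sum_range_succ (fun p q => i.choose p * j.choose q)]
    rw [← Finset.sum_range_reflect]
    have h1 : ∀ k ∈ range (i + 1),
        i.choose (i + 1 - 1 - k) * j.choose (i - (i + 1 - 1 - k)) = i.choose k * j.choose k := by
      intro k hk
      simp only [Finset.mem_range] at hk
      have h1 : i + 1 - 1 - k = i - k := by omega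
      have h2 : i - (i - k) = k := by omega
      rw [h1, h2, Nat.choose_symm (by omega)]
    rw [Finset.sum_congr rfl h1]
    refine Finset.sum_subset (by intro x hx; simp only [Finset.mem_range] at *; omega) ?_
    intro x hx hx'
    simp only [Finset.mem_range] at hx hx'
    rw [Nat.choose_eq_zero_of_lt (by omega)]
    simp
  exact_mod_cast congrArg (fun n : ℕ => (n : ℝ)) hnat

lemma key_sum (a : ℕ) :
    ∑ i ∈ range (a + 1), ∑ j ∈ range (a + 1),
      ((-1 : ℝ) ^ i * (a.choose i : ℝ) / (i ! : ℝ)) * ((-1 : ℝ) ^ j * (a.choose j : ℝ) / (j ! : ℝ))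
        * (((i + j)! : ℝ)) = 1 := by
  have step : ∀ i ∈ range (a + 1), ∀ j ∈ range (a + 1),
      ((-1 : ℝ) ^ i * (a.choose i : ℝ) / (i ! : ℝ)) * ((-1 : ℝ) ^ j * (a.choose j : ℝ) / (j ! : ℝ))
        * (((i + j)! : ℝ))
      = ∑ k ∈ range (a + 1), ((-1 : ℝ) ^ i * (a.choose i : ℝ) * (i.choose k : ℝ)) *
          ((-1 : ℝ) ^ j * (a.choose j : ℝ) * (j.choose k : ℝ)) := by
    intro i hi j hj
    simp only [Finset.mem_range] at hi hj
    have hfact : (((i + j)! : ℝ)) = ((i + j).choose i : ℝ) * (i ! : ℝ) * (j ! : ℝ) := by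
      rw [Nat.choose_symm_add]
      exact_mod_cast (Nat.add_choose_mul_factorial_mul_factorial i j).symm
    rw [hfact, choose_vander a i j (by omega)]
    rw [Finset.sum_mul, Finset.sum_mul, Finset.mul_sum]
    refine Finset.sum_congr rfl fun k _ => ?_
    have hi0 : (i ! : ℝ) ≠ 0 := by positivity
    have hj0 : (j ! : ℝ) ≠ 0 := by positivity
    field_simp
  rw [Finset.sum_congr rfl (fun i hi => Finset.sum_congr rfl (fun j hj => step i hi j hj))]
  have swap1 : ∀ i ∈ range (a + 1),
      ∑ j ∈ range (a + 1), ∑ k ∈ range (a + 1),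
        ((-1 : ℝ) ^ i * (a.choose i : ℝ) * (i.choose k : ℝ)) *
          ((-1 : ℝ) ^ j * (a.choose j : ℝ) * (j.choose k : ℝ))
      = ∑ k ∈ range (a + 1), ((-1 : ℝ) ^ i * (a.choose i : ℝ) * (i.choose k : ℝ)) *
          (if k = a then (-1 : ℝ) ^ a else 0) := by
    intro i hi
    rw [Finset.sum_comm]
    refine Finset.sum_congr rfl fun k hk => ?_
    rw [← Finset.mul_sum, T_eval a k (by simpa using Nat.lt_succ_iff.mp (Finset.mem_range.mp hk))]
  rw [Finset.sum_congr rfl swap1, Finset.sum_comm]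
  have : ∀ k ∈ range (a + 1),
      ∑ i ∈ range (a + 1), ((-1 : ℝ) ^ i * (a.choose i : ℝ) * (i.choose k : ℝ)) *
        (if k = a then (-1 : ℝ) ^ a else 0)
      = if k = a then 1 else 0 := by
    intro k hk
    rw [← Finset.sum_mul, T_eval a k (Nat.lt_succ_iff.mp (Finset.mem_range.mp hk))]
    by_cases hka : k = a
    · simp [hka, ← pow_add, ← two_mul, pow_mul]
    · simp [hka]
  rw [Finset.sum_congr rfl this, Finset.sum_ite_eq' (range (a + 1)) a (fun _ => (1 : ℝ))]
  simp

theorem laguerre_orthonormal_self (a : ℕ) :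
    ∫ x in Set.Ioi (0 : ℝ), Real.exp (-x) * (laguerre a x) ^ 2 = 1 := by
  have hrw : ∀ x : ℝ, Real.exp (-x) * (laguerre a x) ^ 2 =
      ∑ i ∈ range (a + 1), ∑ j ∈ range (a + 1),
        (((-1 : ℝ) ^ i * (a.choose i : ℝ) / (i ! : ℝ)) *
          ((-1 : ℝ) ^ j * (a.choose j : ℝ) / (j ! : ℝ))) * (Real.exp (-x) * x ^ (i + j)) := by
    intro x
    unfold laguerre
    rw [sq, Finset.sum_mul_sum (R := ℝ), Finset.mul_sum]
    refine Finset.sum_congr rfl fun i _ => ?_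
    rw [Finset.mul_sum]
    refine Finset.sum_congr rfl fun j _ => ?_
    rw [pow_add]
    ring
  simp_rw [hrw]
  rw [integral_finset_sum _ (fun i _ =>
    integrable_finset_sum _ (fun j _ => ((integrable_pow_exp (i + j)).const_mul _)))]
  have : ∀ i ∈ range (a + 1),
      ∫ x in Set.Ioi (0 : ℝ), ∑ j ∈ range (a + 1),
        (((-1 : ℝ) ^ i * (a.choose i : ℝ) / (i ! : ℝ)) *
          ((-1 : ℝ) ^ j * (a.choose j : ℝ) / (j ! : ℝ))) * (Real.exp (-x) * x ^ (i + j))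
      = ∑ j ∈ range (a + 1),
        (((-1 : ℝ) ^ i * (a.choose i : ℝ) / (i ! : ℝ)) *
          ((-1 : ℝ) ^ j * (a.choose j : ℝ) / (j ! : ℝ))) * (((i + j)! : ℝ)) := by
    intro i _
    rw [integral_finset_sum _ (fun j _ => ((integrable_pow_exp (i + j)).const_mul _))]
    refine Finset.sum_congr rfl fun j _ => ?_
    rw [MeasureTheory.integral_const_mul, integral_pow_exp]
  rw [Finset.sum_congr rfl this]
  exact key_sum a
end

section
/- For all natural numbers a ≠ b, the integral ∫_0^∞ e^{-x} L_a(x) L_b(x) dx equals 0, where L_a is the simple Laguerre polynomial of degree a. -/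
open MeasureTheory Polynomial Finset

private lemma intA (n : ℕ) : ∫ x in Set.Ioi (0:ℝ), Real.exp (-x) * x ^ n = n.factorial := by
  have h := Real.Gamma_eq_integral (by positivity : (0:ℝ) < n + 1)
  rw [Real.Gamma_nat_eq_factorial] at h
  rw [h]
  refine setIntegral_congr_fun measurableSet_Ioi fun x hx => ?_
  rw [add_sub_cancel_right, Real.rpow_natCast]

private lemma intB (n : ℕ) :
    IntegrableOn (fun x => Real.exp (-x) * x ^ n) (Set.Ioi (0:ℝ)) := by
  have h := Real.GammaIntegral_convergent (s := (n:ℝ)+1) (by positivity)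
  refine h.congr_fun (fun x hx => ?_) measurableSet_Ioi
  simp only [add_sub_cancel_right, Real.rpow_natCast]

private lemma findiff : ∀ (b : ℕ) (p : Polynomial ℝ), p.degree < b →
    ∑ β ∈ Finset.range (b+1), (-1:ℝ)^β * (b.choose β) * p.eval (β:ℝ) = 0 := by
  intro b
  induction b with
  | zero =>
    intro p hp
    have hp0 : p = 0 := by
      rw [← Polynomial.degree_eq_bot]
      exact Nat.WithBot.lt_zero_iff.mp (by exact_mod_cast hp)
    simp [hp0]
  | succ b ih =>
    intro p hp
    by_cases hp0 : p = 0
    · simp [hp0]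
    · set q := p - p.comp (X + C 1) with hqdef
      have hc : (X + C (1:ℝ)).natDegree = 1 := natDegree_X_add_C 1
      have hlc : (p.comp (X + C (1:ℝ))).leadingCoeff = p.leadingCoeff := by
        rw [leadingCoeff_comp (by rw [hc]; exact one_ne_zero),
          (monic_X_add_C (1:ℝ)).leadingCoeff, one_pow, mul_one]
      have hcne : p.comp (X + C (1:ℝ)) ≠ 0 := by
        intro h
        apply hp0
        rw [← leadingCoeff_eq_zero, ← hlc, h, leadingCoeff_zero]
      have hdc : (p.comp (X + C (1:ℝ))).degree = p.degree := by
        rw [degree_eq_natDegree hcne, degree_eq_natDegree hp0, natDegree_comp, hc, mul_one]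
      have hq : q.degree < p.degree := degree_sub_lt hdc.symm hp0 hlc.symm
      have h1 : p.natDegree < b + 1 := (natDegree_lt_iff_degree_lt hp0).mpr hp
      have hqb : q.degree < (b : ℕ) := by
        refine lt_of_lt_of_le hq ?_
        rw [degree_eq_natDegree hp0]
        exact_mod_cast Nat.lt_succ_iff.mp h1
      have hqe : ∀ i : ℕ, q.eval ((i:ℝ)) = p.eval ((i:ℝ)) - p.eval ((i:ℝ)+1) := by
        intro i; simp [hqdef, eval_comp]
      have ihq := ih q hqb
      have h2 : ∑ i ∈ Finset.range (b+1), (-1:ℝ)^i * (b.choose (i+1)) * p.eval ((i:ℝ)+1)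
          = ∑ i ∈ Finset.range b, (-1:ℝ)^i * (b.choose (i+1)) * p.eval ((i:ℝ)+1) := by
        rw [Finset.sum_range_succ, Nat.choose_succ_self]
        simp
      rw [Finset.sum_range_succ' _ (b+1)]
      have e1 : ∀ i ∈ Finset.range (b+1),
          (-1:ℝ)^(i+1) * (((b+1).choose (i+1) : ℕ) : ℝ) * p.eval (((i+1 : ℕ)):ℝ)
          = (-((-1)^i * (b.choose i) * p.eval ((i:ℝ)+1)))
            + (-((-1)^i * (b.choose (i+1)) * p.eval ((i:ℝ)+1))) := by
        intro i _
        rw [Nat.choose_succ_succ]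
        push_cast
        ring
      rw [Finset.sum_congr rfl e1, Finset.sum_add_distrib, Finset.sum_neg_distrib,
        Finset.sum_neg_distrib, h2]
      have h3 : ∑ β ∈ Finset.range (b+1), (-1:ℝ)^β * (b.choose β) * q.eval (β:ℝ)
          = (∑ i ∈ Finset.range b, (-1:ℝ)^i * (b.choose (i+1)) * p.eval ((i:ℝ)+1)) * (-1)
            + p.eval 0 - ∑ i ∈ Finset.range (b+1), (-1:ℝ)^i * (b.choose i) * p.eval ((i:ℝ)+1) := by
        have e2 : ∀ x ∈ Finset.range b, (-1:ℝ)^(x+1) * (b.choose (x+1)) * p.eval ((x:ℝ)+1)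
            = -((-1:ℝ)^x * (b.choose (x+1)) * p.eval ((x:ℝ)+1)) := fun x _ => by ring
        simp only [hqe, mul_sub]
        rw [Finset.sum_sub_distrib, Finset.sum_range_succ' _ b]
        push_cast
        rw [Finset.sum_congr rfl e2, Finset.sum_neg_distrib]
        simp only [Nat.choose_zero_right, Nat.cast_one]
        ring
      have h4 := h3.symm.trans ihq
      simp only [Nat.choose_zero_right, Nat.cast_one]
      push_cast
      linear_combination h4

private lemma momD (b α : ℕ) (h : α < b) :
    ∑ β ∈ Finset.range (b+1), (-1:ℝ)^β * (b.choose β)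
      * (((α+β).factorial : ℝ) / (β.factorial : ℝ)) = 0 := by
  set p : Polynomial ℝ := (ascPochhammer ℝ α).comp (X + C 1) with hp
  have hmon : p.Monic := (monic_ascPochhammer ℝ α).comp (monic_X_add_C 1)
    (by rw [natDegree_X_add_C]; exact one_ne_zero)
  have hnd : p.natDegree = α := by
    rw [hp, natDegree_comp, natDegree_X_add_C, mul_one, ascPochhammer_natDegree]
  have hdeg : p.degree < b := by
    rw [← natDegree_lt_iff_degree_lt hmon.ne_zero, hnd]
    exact h
  have heval : ∀ β : ℕ, p.eval (β:ℝ) = ((α+β).factorial : ℝ) / (β.factorial : ℝ) := by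
    intro β
    rw [hp, eval_comp]
    simp only [eval_add, eval_X, eval_C]
    rw [eq_div_iff (by exact_mod_cast β.factorial_ne_zero)]
    have hfa := Nat.factorial_mul_ascFactorial β α
    have hcast : ((β+1).ascFactorial α : ℝ) = (ascPochhammer ℝ α).eval ((β:ℝ)+1) := by
      have hca := Nat.cast_ascFactorial (S := ℝ) (β+1) α
      push_cast at hca ⊢
      rw [hca]
    rw [← hcast, mul_comm]
    exact_mod_cast congrArg (Nat.cast : ℕ → ℝ) (by rw [hfa, Nat.add_comm β α])
  calc ∑ β ∈ Finset.range (b+1), (-1:ℝ)^β * (b.choose β)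
          * (((α+β).factorial : ℝ) / (β.factorial : ℝ))
      = ∑ β ∈ Finset.range (b+1), (-1:ℝ)^β * (b.choose β) * p.eval (β:ℝ) :=
        Finset.sum_congr rfl fun β _ => by rw [heval]
    _ = 0 := findiff b p hdeg

private lemma orth_lt (a b : ℕ) (h : a < b) :
    ∫ x in Set.Ioi (0:ℝ), Real.exp (-x) * laguerre a x * laguerre b x = 0 := by
  have hrw : ∀ x : ℝ, Real.exp (-x) * laguerre a x * laguerre b x
      = ∑ α ∈ Finset.range (a+1), ∑ β ∈ Finset.range (b+1),
        ((-1:ℝ)^α * (a.choose α) / α.factorial) * ((-1:ℝ)^β * (b.choose β) / β.factorial)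
          * (Real.exp (-x) * x ^ (α+β)) := by
    intro x
    unfold laguerre
    rw [mul_assoc, Finset.sum_mul_sum, Finset.mul_sum]
    refine Finset.sum_congr rfl fun α _ => ?_
    rw [Finset.mul_sum]
    refine Finset.sum_congr rfl fun β _ => ?_
    rw [pow_add]
    ring
  simp only [hrw]
  rw [integral_finset_sum _ fun α _ => integrable_finset_sum _ fun β _ =>
    (intB (α+β)).const_mul _]
  refine Finset.sum_eq_zero fun α hα => ?_
  rw [integral_finset_sum _ fun β _ => (intB (α+β)).const_mul _]
  have hab : α < b := lt_of_le_of_lt (Nat.lt_succ_iff.mp (Finset.mem_range.mp hα)) h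
  calc ∑ β ∈ Finset.range (b+1), ∫ x in Set.Ioi (0:ℝ),
          ((-1:ℝ)^α * (a.choose α) / α.factorial) * ((-1:ℝ)^β * (b.choose β) / β.factorial)
          * (Real.exp (-x) * x ^ (α+β))
      = ∑ β ∈ Finset.range (b+1), ((-1:ℝ)^α * (a.choose α) / α.factorial)
          * ((-1:ℝ)^β * (b.choose β) * (((α+β).factorial : ℝ) / (β.factorial : ℝ))) := by
        refine Finset.sum_congr rfl fun β _ => ?_
        rw [integral_const_mul, intA]
        ring
    _ = ((-1:ℝ)^α * (a.choose α) / α.factorial)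
          * ∑ β ∈ Finset.range (b+1), (-1:ℝ)^β * (b.choose β)
            * (((α+β).factorial : ℝ) / (β.factorial : ℝ)) := by
        rw [Finset.mul_sum]
    _ = 0 := by rw [momD b α hab, mul_zero]

theorem laguerre_orthogonal (a b : ℕ) (hab : a ≠ b) :
    ∫ x in Set.Ioi (0 : ℝ), Real.exp (-x) * laguerre a x * laguerre b x = 0 := by
  rcases lt_or_gt_of_ne hab with h | h
  · exact orth_lt a b h
  · have hsym : ∀ x : ℝ, Real.exp (-x) * laguerre a x * laguerre b x
        = Real.exp (-x) * laguerre b x * laguerre a x := fun x => by ring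
    simp only [hsym]
    exact orth_lt b a h
end

section
/- The number of multiset derangements of the multiset 1^{a_1} ... n^{a_n} equals (-1)^{a_1+...+a_n} ∫_0^∞ e^{-x} L_{a_1}(x) · ... · L_{a_n}(x) dx (Even–Gillis theorem). -/
/-- The number of multiset derangements of the word `w₀ : Fin m → Fin n`:
rearrangements of `w₀` (same number of occurrences of every symbol) that
differ from `w₀` in every position. -/
def multisetDerangementCount {m n : ℕ} (w₀ : Fin m → Fin n) : ℕ :=
  Fintype.card {f : Fin m → Fin n //
    (∀ j, (Finset.univ.filter fun i => f i = j).card =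
          (Finset.univ.filter fun i => w₀ i = j).card) ∧
    ∀ i, f i ≠ w₀ i}

open Finset MeasureTheory

namespace EvenGillisAux

/-! ### Integral facts -/

lemma integrable_exp_pow (k : ℕ) :
    IntegrableOn (fun x : ℝ => Real.exp (-x) * x ^ k) (Set.Ioi 0) := by
  have h := Real.GammaIntegral_convergent (s := (k : ℝ) + 1) (by positivity)
  refine h.congr_fun (fun x hx => ?_) measurableSet_Ioi
  simp only [add_sub_cancel_right, Real.rpow_natCast]

lemma integral_exp_pow (k : ℕ) :
    ∫ x in Set.Ioi (0 : ℝ), Real.exp (-x) * x ^ k = (Nat.factorial k : ℝ) := by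
  have h := Real.Gamma_eq_integral (s := (k : ℝ) + 1) (by positivity)
  rw [Real.Gamma_nat_eq_factorial] at h
  rw [h]
  refine setIntegral_congr_fun measurableSet_Ioi (fun x hx => ?_)
  rw [add_sub_cancel_right, Real.rpow_natCast]

variable {n : ℕ}

/-! ### Fiber counts -/

/-- fiber count of a function into `Fin n` -/
def fc {α : Type*} [Fintype α] (f : α → Fin n) (j : Fin n) : ℕ :=
  (Finset.univ.filter fun i => f i = j).card

lemma fc_eq_card {α : Type*} [Fintype α] (f : α → Fin n) (j : Fin n) :
    fc f j = Fintype.card {i // f i = j} := (Fintype.card_subtype _).symm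

/-! ### The basic counting lemma -/

/-- permutations intertwining `f` and `g` correspond to families of fiber bijections -/
noncomputable def permFiberEquiv {α : Type*} [Fintype α] [DecidableEq α] (g f : α → Fin n) :
    {σ : Equiv.Perm α // g ∘ σ = f} ≃ (∀ j, {x // f x = j} ≃ {x // g x = j}) where
  toFun σ j :=
    { toFun := fun x => ⟨σ.1 x.1, by
        have := congrFun σ.2 x.1; simp only [Function.comp_apply] at this
        rw [this, x.2]⟩
      invFun := fun y => ⟨σ.1.symm y.1, by
        have := congrFun σ.2 (σ.1.symm y.1)
        simp only [Function.comp_apply, Equiv.apply_symm_apply] at this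
        rw [← this, y.2]⟩
      left_inv := fun x => by ext; simp
      right_inv := fun y => by ext; simp }
  invFun e := by
    have helper1 : ∀ {j j' : Fin n} (_ : j = j') (x : α) (hx : f x = j) (hx' : f x = j'),
        ((e j) ⟨x, hx⟩).1 = ((e j') ⟨x, hx'⟩).1 := by
      rintro j j' rfl x hx hx'; rfl
    have helper2 : ∀ {j j' : Fin n} (_ : j = j') (y : α) (hy : g y = j) (hy' : g y = j'),
        ((e j).symm ⟨y, hy⟩).1 = ((e j').symm ⟨y, hy'⟩).1 := by
      rintro j j' rfl y hy hy'; rfl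
    refine ⟨⟨fun x => (e (f x) ⟨x, rfl⟩).1, fun y => ((e (g y)).symm ⟨y, rfl⟩).1, ?_, ?_⟩, ?_⟩
    · intro x
      set u := e (f x) ⟨x, rfl⟩ with hu
      show ((e (g u.1)).symm ⟨u.1, rfl⟩).1 = x
      rw [helper2 u.2 u.1 rfl u.2]
      have : (⟨u.1, u.2⟩ : {z // g z = f x}) = u := rfl
      rw [this, hu, Equiv.symm_apply_apply]
    · intro y
      set v := (e (g y)).symm ⟨y, rfl⟩ with hv
      show (e (f v.1) ⟨v.1, rfl⟩).1 = y
      rw [helper1 v.2 v.1 rfl v.2]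
      have : (⟨v.1, v.2⟩ : {z // f z = g y}) = v := rfl
      rw [this, hv, Equiv.apply_symm_apply]
    · funext x
      exact (e (f x) ⟨x, rfl⟩).2
  left_inv σ := by
    apply Subtype.ext
    ext x
    rfl
  right_inv e := by
    funext j
    ext x
    obtain ⟨x, rfl⟩ := x
    rfl

lemma card_perm_fiber {α : Type*} [Fintype α] [DecidableEq α] (g f : α → Fin n)
    (h : ∀ j, fc f j = fc g j) :
    Fintype.card {σ : Equiv.Perm α // g ∘ σ = f} = ∏ j, (fc g j).factorial := by
  rw [Fintype.card_congr (permFiberEquiv g f), Fintype.card_pi]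
  refine Finset.prod_congr rfl fun j _ => ?_
  have hc : Fintype.card {x // f x = j} = Fintype.card {x // g x = j} := by
    rw [← fc_eq_card, ← fc_eq_card]; exact h j
  rw [Fintype.card_equiv (Fintype.equivOfCardEq hc), ← fc_eq_card, h j]

/-- there are `(card α)! / ∏ (fc g j)!` functions with the same fiber counts as `g` -/
lemma W_mul {α : Type*} [Fintype α] [DecidableEq α] (g : α → Fin n) :
    Fintype.card {f : α → Fin n // ∀ j, fc f j = fc g j} * ∏ j, (fc g j).factorial
      = (Fintype.card α).factorial := by
  classical
  rw [← Fintype.card_perm]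
  have hΨc : ∀ σ : Equiv.Perm α, ∀ j, fc (g ∘ σ) j = fc g j := by
    intro σ j
    rw [fc_eq_card, fc_eq_card]
    exact Fintype.card_congr (σ.subtypeEquiv fun a => Iff.rfl)
  let Ψ : Equiv.Perm α → {f : α → Fin n // ∀ j, fc f j = fc g j} :=
    fun σ => ⟨g ∘ σ, hΨc σ⟩
  rw [← Fintype.card_congr (Equiv.sigmaFiberEquiv Ψ), Fintype.card_sigma]
  have key : ∀ f : {f : α → Fin n // ∀ j, fc f j = fc g j},
      Fintype.card {σ // Ψ σ = f} = ∏ j, (fc g j).factorial := by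
    intro f
    refine Eq.trans (Fintype.card_congr (Equiv.subtypeEquivRight
      (q := fun σ : Equiv.Perm α => g ∘ σ = f.1) (fun σ => by
        constructor
        · intro h; exact congrArg Subtype.val h
        · intro h; exact Subtype.ext h))) ?_
    exact card_perm_fiber g f.1 f.2
  rw [Finset.sum_congr rfl fun f _ => key f, Finset.sum_const, Finset.card_univ,
    smul_eq_mul]

/-! ### Counting rearrangements fixed on a set -/

lemma fc_split {m : ℕ} (T : Finset (Fin m)) (w₀ f : Fin m → Fin n)
    (hf : ∀ i ∈ T, f i = w₀ i) (j : Fin n) :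
    fc f j = (T.filter fun i => w₀ i = j).card
      + fc (fun x : {i : Fin m // i ∉ T} => f x.1) j := by
  rw [fc, ← Finset.union_compl T, Finset.filter_union,
    Finset.card_union_of_disjoint (Finset.disjoint_filter_filter disjoint_compl_right)]
  congr 1
  · exact congrArg Finset.card (Finset.filter_congr fun i hi => by rw [hf i hi])
  · rw [fc_eq_card]
    rw [Fintype.card_congr (Equiv.subtypeSubtypeEquivSubtypeInter (fun i => i ∉ T)
      (fun i => f i = j))]
    rw [Fintype.card_subtype]
    congr 1
    ext i
    simp [Finset.mem_compl, and_comm]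

noncomputable def restrictEquiv {m : ℕ} (w₀ : Fin m → Fin n) (T : Finset (Fin m)) :
    {f : Fin m → Fin n // (∀ j, fc f j = fc w₀ j) ∧ ∀ i ∈ T, f i = w₀ i}
      ≃ {h : {i : Fin m // i ∉ T} → Fin n //
          ∀ j, fc h j = fc (fun x : {i : Fin m // i ∉ T} => w₀ x.1) j} where
  toFun f := ⟨fun x => f.1 x.1, fun j => by
    have h1 := fc_split T w₀ f.1 f.2.2 j
    have h2 := fc_split T w₀ w₀ (fun _ _ => rfl) j
    have h3 := f.2.1 j
    omega⟩
  invFun h := by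
    refine ⟨fun i => if hi : i ∈ T then w₀ i else h.1 ⟨i, hi⟩, fun j => ?_, fun i hi => dif_pos hi⟩
    have h1 := fc_split T w₀ (fun i => if hi : i ∈ T then w₀ i else h.1 ⟨i, hi⟩)
      (fun i hi => dif_pos hi) j
    have h2 := fc_split T w₀ w₀ (fun _ _ => rfl) j
    have hr : (fun x : {i : Fin m // i ∉ T} =>
        if hi : x.1 ∈ T then w₀ x.1 else h.1 ⟨x.1, hi⟩) = h.1 := by
      funext x
      rcases x with ⟨x, hx⟩
      exact dif_neg hx
    rw [h1, h2, hr, h.2 j]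
  left_inv f := by
    apply Subtype.ext
    funext i
    by_cases hi : i ∈ T
    · exact (dif_pos hi).trans (f.2.2 i hi).symm
    · exact dif_neg hi
  right_inv h := by
    apply Subtype.ext
    funext x
    rcases x with ⟨x, hx⟩
    exact dif_neg hx

lemma card_fixed {m : ℕ} (w₀ : Fin m → Fin n) (T : Finset (Fin m)) :
    ((Finset.univ.filter fun f : Fin m → Fin n =>
        (∀ j, fc f j = fc w₀ j) ∧ ∀ i ∈ T, f i = w₀ i).card)
      * ∏ j, (fc w₀ j - (T.filter fun i => w₀ i = j).card).factorial
      = (m - T.card).factorial := by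
  classical
  have hg : ∀ j, fc (fun x : {i : Fin m // i ∉ T} => w₀ x.1) j
      = fc w₀ j - (T.filter fun i => w₀ i = j).card := by
    intro j
    have := fc_split T w₀ w₀ (fun _ _ => rfl) j
    omega
  have hα : Fintype.card {i : Fin m // i ∉ T} = m - T.card := by
    rw [Fintype.card_subtype_compl, Fintype.card_fin]
    congr 1
    exact Fintype.card_coe T
  have key := W_mul (fun x : {i : Fin m // i ∉ T} => w₀ x.1)
  rw [hα] at key
  rw [← Fintype.card_subtype, Fintype.card_congr (restrictEquiv w₀ T), ← key]
  congr 1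
  exact Finset.prod_congr rfl fun j _ => by rw [hg]

/-! ### Inclusion–exclusion -/

lemma incl_excl {m : ℕ} (w₀ : Fin m → Fin n) (P : (Fin m → Fin n) → Prop) [DecidablePred P] :
    (((Finset.univ.filter fun f => P f ∧ ∀ i, f i ≠ w₀ i).card : ℝ))
      = ∑ T ∈ (Finset.univ : Finset (Fin m)).powerset,
          (-1 : ℝ) ^ T.card *
            ((Finset.univ.filter fun f => P f ∧ ∀ i ∈ T, f i = w₀ i).card : ℝ) := by
  classical
  have key : ∀ f : Fin m → Fin n,
      (if ∀ i, f i ≠ w₀ i then (1 : ℝ) else 0)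
        = ∑ T ∈ (Finset.univ : Finset (Fin m)).powerset,
            (if ∀ i ∈ T, f i = w₀ i then (-1 : ℝ) ^ T.card else 0) := by
    intro f
    set Fix : Finset (Fin m) := Finset.univ.filter (fun i => f i = w₀ i) with hFix
    have h1 : ∀ T : Finset (Fin m), (∀ i ∈ T, f i = w₀ i) ↔ T ⊆ Fix := by
      intro T
      simp [hFix, Finset.subset_iff]
    rw [Finset.sum_congr rfl fun T _ => if_congr (h1 T) rfl rfl]
    rw [← Finset.sum_filter]
    have h2 : (Finset.univ : Finset (Fin m)).powerset.filter (fun T => T ⊆ Fix)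
        = Fix.powerset := by
      ext T
      simp [Finset.mem_powerset, Finset.subset_univ]
    rw [h2]
    have h3 := Finset.sum_powerset_neg_one_pow_card (x := Fix)
    have h4 : (∑ T ∈ Fix.powerset, (-1 : ℝ) ^ T.card)
        = ((∑ T ∈ Fix.powerset, (-1 : ℤ) ^ T.card : ℤ) : ℝ) := by push_cast; rfl
    rw [h4, h3]
    have h5 : (Fix = ∅) ↔ (∀ i, f i ≠ w₀ i) := by
      simp [hFix, Finset.filter_eq_empty_iff]
    by_cases h : ∀ i, f i ≠ w₀ i
    · rw [if_pos h, if_pos (h5.2 h)]; norm_num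
    · rw [if_neg h, if_neg (fun he => h (h5.1 he))]; norm_num
  have lhs : ((Finset.univ.filter fun f => P f ∧ ∀ i, f i ≠ w₀ i).card : ℝ)
      = ∑ f ∈ Finset.univ.filter P, (if ∀ i, f i ≠ w₀ i then (1 : ℝ) else 0) := by
    rw [Finset.sum_boole, Finset.filter_filter]
  rw [lhs, Finset.sum_congr rfl fun f _ => key f, Finset.sum_comm]
  refine Finset.sum_congr rfl fun T _ => ?_
  rw [Finset.sum_congr rfl fun f _ => (by rw [mul_ite, mul_one, mul_zero] :
      (if ∀ i ∈ T, f i = w₀ i then (-1 : ℝ) ^ T.card else 0)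
        = (-1 : ℝ) ^ T.card * (if ∀ i ∈ T, f i = w₀ i then (1:ℝ) else 0))]
  rw [← Finset.mul_sum, Finset.sum_boole, Finset.filter_filter]

/-! ### Counting subsets with a given fiber profile -/

lemma card_T {m : ℕ} (w₀ : Fin m → Fin n) (β : Fin n → ℕ) :
    (((Finset.univ : Finset (Fin m)).powerset.filter
        fun T => (fun j => (T.filter fun i => w₀ i = j).card) = β).card)
      = ∏ j, (fc w₀ j).choose (β j) := by
  classical
  have htarget : ∏ j, (fc w₀ j).choose (β j)
      = (Fintype.piFinset fun j =>
          (Finset.univ.filter fun i => w₀ i = j).powersetCard (β j)).card := by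
    rw [Fintype.card_piFinset]
    exact Finset.prod_congr rfl fun j _ => by rw [Finset.card_powersetCard]; rfl
  rw [htarget]
  refine Finset.card_bij' (fun T _ => fun j => T.filter fun i => w₀ i = j)
    (fun p _ => Finset.univ.biUnion p) ?_ ?_ ?_ ?_
  · intro T hT
    rw [Finset.mem_filter] at hT
    rw [Fintype.mem_piFinset]
    intro j
    rw [Finset.mem_powersetCard]
    constructor
    · exact Finset.filter_subset_filter _ (Finset.subset_univ T)
    · exact congrFun hT.2 j
  · intro p hp
    rw [Fintype.mem_piFinset] at hp
    have hsub : ∀ j, p j ⊆ Finset.univ.filter fun i => w₀ i = j :=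
      fun j => (Finset.mem_powersetCard.1 (hp j)).1
    have hfil : ∀ j, (Finset.univ.biUnion p).filter (fun i => w₀ i = j) = p j := by
      intro j
      ext i
      simp only [Finset.mem_filter, Finset.mem_biUnion, Finset.mem_univ, true_and]
      constructor
      · rintro ⟨⟨k, hik⟩, hij⟩
        have : w₀ i = k := (Finset.mem_filter.1 (hsub k hik)).2
        rwa [this.symm.trans hij] at hik
      · intro hip
        exact ⟨⟨j, hip⟩, (Finset.mem_filter.1 (hsub j hip)).2⟩
    rw [Finset.mem_filter]
    refine ⟨Finset.mem_powerset.2 (Finset.subset_univ _), ?_⟩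
    funext j
    rw [hfil j]
    exact (Finset.mem_powersetCard.1 (hp j)).2
  · intro T hT
    ext i
    simp only [Finset.mem_biUnion, Finset.mem_univ, true_and, Finset.mem_filter]
    exact ⟨fun ⟨k, hik, _⟩ => hik, fun hi => ⟨w₀ i, hi, rfl⟩⟩
  · intro p hp
    rw [Fintype.mem_piFinset] at hp
    have hsub : ∀ j, p j ⊆ Finset.univ.filter fun i => w₀ i = j :=
      fun j => (Finset.mem_powersetCard.1 (hp j)).1
    funext j
    ext i
    simp only [Finset.mem_filter, Finset.mem_biUnion, Finset.mem_univ, true_and]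
    constructor
    · rintro ⟨⟨k, hik⟩, hij⟩
      have : w₀ i = k := (Finset.mem_filter.1 (hsub k hik)).2
      rwa [this.symm.trans hij] at hik
    · intro hip
      exact ⟨⟨j, hip⟩, (Finset.mem_filter.1 (hsub j hip)).2⟩

/-! ### Laguerre expansion -/

lemma laguerre_expand (a : Fin n → ℕ) (x : ℝ) :
    Real.exp (-x) * ∏ j, laguerre (a j) x
      = ∑ α ∈ Fintype.piFinset (fun j => Finset.range (a j + 1)),
          (∏ j, ((-1:ℝ)^(α j) * ((a j).choose (α j) : ℝ) / ((α j).factorial : ℝ)))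
            * (Real.exp (-x) * x ^ (∑ j, α j)) := by
  unfold laguerre
  rw [Finset.prod_univ_sum, Finset.mul_sum]
  refine Finset.sum_congr rfl fun α _ => ?_
  have h : ∏ j, ((-1:ℝ)^(α j) * ((a j).choose (α j):ℝ) * x ^ (α j) / ((α j).factorial : ℝ))
      = (∏ j, ((-1:ℝ)^(α j) * ((a j).choose (α j):ℝ) / ((α j).factorial : ℝ)))
          * x ^ (∑ j, α j) := by
    rw [← Finset.prod_pow_eq_pow_sum, ← Finset.prod_mul_distrib]
    exact Finset.prod_congr rfl fun j _ => by ring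
  rw [h]; ring

end EvenGillisAux

open EvenGillisAux

/-- The Even–Gillis theorem: the number of derangements of the multiset
`1^{a₁} ⋯ n^{aₙ}` equals
`(-1)^{a₁+⋯+aₙ} ∫₀^∞ e^{-x} L_{a₁}(x) ⋯ L_{aₙ}(x) dx`. -/
theorem even_gillis (n : ℕ) (a : Fin n → ℕ) (w₀ : Fin (∑ j, a j) → Fin n)
    (hmono : Monotone w₀)
    (hcount : ∀ j, (Finset.univ.filter fun i => w₀ i = j).card = a j) :
    (multisetDerangementCount w₀ : ℝ) =
      (-1 : ℝ) ^ (∑ j, a j) *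
        ∫ x in Set.Ioi (0 : ℝ), Real.exp (-x) * ∏ j, laguerre (a j) x := by
  classical
  have hfc : ∀ j, fc w₀ j = a j := hcount
  -- Step 1: the integral
  have hI : (∫ x in Set.Ioi (0:ℝ), Real.exp (-x) * ∏ j, laguerre (a j) x)
      = ∑ α ∈ Fintype.piFinset (fun j => Finset.range (a j + 1)),
          (∏ j, ((-1:ℝ)^(α j) * ((a j).choose (α j) : ℝ) / ((α j).factorial : ℝ)))
          * ((∑ j, α j).factorial : ℝ) := by
    simp only [laguerre_expand a]
    rw [MeasureTheory.integral_finset_sum _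
      (fun α _ => ((integrable_exp_pow (∑ j, α j)).const_mul _))]
    refine Finset.sum_congr rfl fun α _ => ?_
    rw [MeasureTheory.integral_const_mul, integral_exp_pow]
  -- Step 2: inclusion–exclusion
  have hDcard : multisetDerangementCount w₀ = (Finset.univ.filter
      (fun f : Fin (∑ j, a j) → Fin n =>
        (∀ j, fc f j = fc w₀ j) ∧ ∀ i, f i ≠ w₀ i)).card := by
    rw [multisetDerangementCount, Fintype.card_subtype]
    rfl
  have hD1 : ((multisetDerangementCount w₀ : ℝ))
      = ∑ T ∈ (Finset.univ : Finset (Fin (∑ j, a j))).powerset, (-1:ℝ)^T.card *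
          ((Finset.univ.filter fun f : Fin (∑ j, a j) → Fin n =>
            (∀ j, fc f j = fc w₀ j) ∧ ∀ i ∈ T, f i = w₀ i).card : ℝ) := by
    rw [hDcard]
    exact incl_excl w₀ _
  -- Step 3: evaluate each term
  have hT : ∀ T : Finset (Fin (∑ j, a j)),
      ((Finset.univ.filter fun f : Fin (∑ j, a j) → Fin n =>
          (∀ j, fc f j = fc w₀ j) ∧ ∀ i ∈ T, f i = w₀ i).card : ℝ)
        = (((∑ j, a j) - T.card).factorial : ℝ)
            / ∏ j, (((a j - (T.filter fun i => w₀ i = j).card).factorial : ℕ) : ℝ) := by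
    intro T
    have hne : (∏ j, (((a j - (T.filter fun i => w₀ i = j).card).factorial : ℕ) : ℝ)) ≠ 0 := by
      positivity
    rw [eq_div_iff hne]
    have h := card_fixed w₀ T
    have hprodeq : (∏ j, ((a j - (T.filter fun i => w₀ i = j).card).factorial))
        = ∏ j, ((fc w₀ j - (T.filter fun i => w₀ i = j).card).factorial) :=
      Finset.prod_congr rfl fun j _ => by rw [hfc]
    rw [← Nat.cast_prod, ← Nat.cast_mul, hprodeq, h]
  -- Step 4: group subsets by fiber profile
  have hTcard : ∀ T : Finset (Fin (∑ j, a j)),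
      T.card = ∑ j, (T.filter fun i => w₀ i = j).card :=
    fun T => Finset.card_eq_sum_card_fiberwise (fun x _ => Finset.mem_univ (w₀ x))
  have hD2 : (multisetDerangementCount w₀ : ℝ)
      = ∑ T ∈ (Finset.univ : Finset (Fin (∑ j, a j))).powerset,
          (-1:ℝ)^(∑ j, (T.filter fun i => w₀ i = j).card)
            * ((((∑ j, a j) - ∑ j, (T.filter fun i => w₀ i = j).card).factorial : ℝ)
              / ∏ j, (((a j - (T.filter fun i => w₀ i = j).card).factorial : ℕ) : ℝ)) := by
    rw [hD1]
    refine Finset.sum_congr rfl fun T _ => ?_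
    rw [hT T, hTcard T]
  have maps : ∀ T ∈ (Finset.univ : Finset (Fin (∑ j, a j))).powerset,
      (fun j => (T.filter fun i => w₀ i = j).card)
        ∈ Fintype.piFinset (fun j => Finset.range (a j + 1)) := by
    intro T _
    rw [Fintype.mem_piFinset]
    intro j
    rw [Finset.mem_range, Nat.lt_succ_iff, ← hfc j]
    exact Finset.card_le_card (Finset.filter_subset_filter _ (Finset.subset_univ T))
  have hD3 : (multisetDerangementCount w₀ : ℝ)
      = ∑ β ∈ Fintype.piFinset (fun j => Finset.range (a j + 1)),
          ((∏ j, (a j).choose (β j) : ℕ) : ℝ)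
            * ((-1:ℝ)^(∑ j, β j)
              * ((((∑ j, a j) - ∑ j, β j).factorial : ℝ)
                / ∏ j, (((a j - β j).factorial : ℕ) : ℝ))) := by
    rw [hD2, ← Finset.sum_fiberwise_of_maps_to maps
      (fun T => (-1:ℝ)^(∑ j, (T.filter fun i => w₀ i = j).card)
        * ((((∑ j, a j) - ∑ j, (T.filter fun i => w₀ i = j).card).factorial : ℝ)
          / ∏ j, (((a j - (T.filter fun i => w₀ i = j).card).factorial : ℕ) : ℝ)))]
    refine Finset.sum_congr rfl fun β _ => ?_
    have step : ∀ T ∈ (Finset.univ : Finset (Fin (∑ j, a j))).powerset.filter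
        (fun T => (fun j => (T.filter fun i => w₀ i = j).card) = β),
        (-1:ℝ)^(∑ j, (T.filter fun i => w₀ i = j).card)
          * ((((∑ j, a j) - ∑ j, (T.filter fun i => w₀ i = j).card).factorial : ℝ)
            / ∏ j, (((a j - (T.filter fun i => w₀ i = j).card).factorial : ℕ) : ℝ))
        = (-1:ℝ)^(∑ j, β j)
            * ((((∑ j, a j) - ∑ j, β j).factorial : ℝ)
              / ∏ j, (((a j - β j).factorial : ℕ) : ℝ)) := by
      intro T hT'
      have hβj : ∀ j, (T.filter fun i => w₀ i = j).card = β j :=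
        fun j => congrFun (Finset.mem_filter.1 hT').2 j
      simp only [hβj]
    rw [Finset.sum_congr rfl step, Finset.sum_const, card_T w₀ β, nsmul_eq_mul]
    congr 2
    exact Finset.prod_congr rfl fun j _ => by rw [hfc]
  -- Step 5: reindex and match term by term
  have final : (∑ β ∈ Fintype.piFinset (fun j => Finset.range (a j + 1)),
          ((∏ j, (a j).choose (β j) : ℕ) : ℝ)
            * ((-1:ℝ)^(∑ j, β j)
              * ((((∑ j, a j) - ∑ j, β j).factorial : ℝ)
                / ∏ j, (((a j - β j).factorial : ℕ) : ℝ))))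
      = (-1:ℝ)^(∑ j, a j) * ∑ α ∈ Fintype.piFinset (fun j => Finset.range (a j + 1)),
          (∏ j, ((-1:ℝ)^(α j) * ((a j).choose (α j):ℝ) / ((α j).factorial:ℝ)))
            * ((∑ j, α j).factorial : ℝ) := by
    rw [Finset.mul_sum]
    refine Finset.sum_bij' (fun β _ => fun j => a j - β j) (fun α _ => fun j => a j - α j)
      ?_ ?_ ?_ ?_ ?_
    · exact fun β _ => Fintype.mem_piFinset.2
        (fun j => Finset.mem_range.2 (Nat.lt_succ_of_le (Nat.sub_le _ _)))
    · exact fun α _ => Fintype.mem_piFinset.2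
        (fun j => Finset.mem_range.2 (Nat.lt_succ_of_le (Nat.sub_le _ _)))
    · intro β hβ
      have hle : ∀ j, β j ≤ a j := fun j => Nat.lt_succ_iff.1
        (Finset.mem_range.1 (Fintype.mem_piFinset.1 hβ j))
      funext j
      exact Nat.sub_sub_self (hle j)
    · intro α hα
      have hle : ∀ j, α j ≤ a j := fun j => Nat.lt_succ_iff.1
        (Finset.mem_range.1 (Fintype.mem_piFinset.1 hα j))
      funext j
      exact Nat.sub_sub_self (hle j)
    · intro β hβ
      have hle : ∀ j, β j ≤ a j := fun j => Nat.lt_succ_iff.1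
        (Finset.mem_range.1 (Fintype.mem_piFinset.1 hβ j))
      have hmst : (∑ j, a j) = (∑ j, β j) + (∑ j, (a j - β j)) := by
        rw [← Finset.sum_add_distrib]
        exact Finset.sum_congr rfl fun j _ => (Nat.add_sub_cancel' (hle j)).symm
      have hms : (∑ j, a j) - (∑ j, β j) = ∑ j, (a j - β j) := by
        rw [hmst]; exact Nat.add_sub_cancel_left _ _
      have hch : ∀ j, (a j).choose (a j - β j) = (a j).choose (β j) :=
        fun j => Nat.choose_symm (hle j)
      have hsplit : (∏ j, ((-1:ℝ)^(a j - β j) * ((a j).choose (a j - β j):ℝ)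
            / ((a j - β j).factorial:ℝ)))
          = (-1:ℝ)^(∑ j, (a j - β j)) *
              ((∏ j, (((a j).choose (β j) : ℕ):ℝ)) / ∏ j, (((a j - β j).factorial : ℕ):ℝ)) := by
        rw [← Finset.prod_pow_eq_pow_sum, ← Finset.prod_div_distrib, ← Finset.prod_mul_distrib]
        exact Finset.prod_congr rfl fun j _ => by rw [hch j, mul_div_assoc]
      simp only []
      rw [hsplit, hms, hmst]
      have h1 : ((-1:ℝ)^(∑ j, (a j - β j))) * ((-1:ℝ)^(∑ j, (a j - β j))) = 1 := by
        rw [← pow_add]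
        exact Even.neg_one_pow ⟨_, rfl⟩
      push_cast
      rw [pow_add]
      linear_combination (-((-1:ℝ)^(∑ j, β j)
        * (∏ j, (((a j).choose (β j) : ℕ):ℝ))
        * (((∑ j, (a j - β j)).factorial : ℕ):ℝ)
        / ∏ j, (((a j - β j).factorial : ℕ):ℝ))) * h1
  rw [hD3, final, hI]
end

section
/- The number of multiset derangements of 1^2 2^2 ... n^2 (two copies of each of n symbols) satisfies the closed form given by the Even–Gillis integral: M(2,...,2) = ∫_0^∞ e^{-x} L_2(x)^n dx, where L_2(x) = 1 - 2x + x²/2. In particular M(2,2,2) = 10. -/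
/-- The sorted word `1 1 2 2 ⋯ n n` with two copies of each of `n` symbols. -/
def sortedWordTwo (n : ℕ) : Fin (2 * n) → Fin n :=
  fun i => ⟨(i : ℕ) / 2, by have := i.isLt; omega⟩


section AuxEvenGillis
open Finset
variable {n : ℕ}

/-- fiber of `Sigma.fst` -/
def sigmaFstFiber {β : Type*} {B : β → Type*} (j : β) :
    {s : Σ j', B j' // s.1 = j} ≃ B j where
  toFun s := s.2 ▸ s.1.2
  invFun y := ⟨⟨j, y⟩, rfl⟩
  left_inv := by rintro ⟨⟨j', y⟩, h⟩; cases h; rfl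
  right_inv y := rfl

def sigmaRepr {α β : Type*} (k : β → ℕ) :
    (Σ f : α → β, ∀ j, {i // f i = j} ≃ Fin (k j)) → (α ≃ Σ j, Fin (k j)) :=
  fun fg => (Equiv.sigmaFiberEquiv fg.1).symm.trans (Equiv.sigmaCongrRight fg.2)

theorem sigmaRepr_bij {α β : Type*} (k : β → ℕ) : Function.Bijective (sigmaRepr (α := α) k) := by
  constructor
  · rintro ⟨f, g⟩ ⟨f', g'⟩ h
    have hpt : ∀ i, (⟨f i, g (f i) ⟨i, rfl⟩⟩ : Σ j, Fin (k j)) = ⟨f' i, g' (f' i) ⟨i, rfl⟩⟩ := by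
      intro i
      have := congrArg (fun e : α ≃ Σ j, Fin (k j) => e i) h
      exact this
    have hf : f = f' := funext fun i => congrArg Sigma.fst (hpt i)
    subst hf
    suffices hg : g = g' by rw [hg]
    funext j
    ext ⟨i, hi⟩
    subst hi
    have := hpt i
    rw [Sigma.mk.inj_iff] at this
    exact Fin.val_eq_val _ _ |>.mp (congrArg Fin.val (eq_of_heq this.2)) ▸ rfl
  · intro e
    refine ⟨⟨fun i => (e i).1, fun j => (e.subtypeEquiv fun i => Iff.rfl).trans (sigmaFstFiber j)⟩, ?_⟩
    exact Equiv.ext fun i => rfl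

theorem card_fiber_count {α β : Type*} [Fintype α] [DecidableEq α] [Fintype β] [DecidableEq β]
    (k : β → ℕ) (hk : ∑ j, k j = Fintype.card α) :
    Nat.card {f : α → β // ∀ j, (univ.filter fun i => f i = j).card = k j}
      * ∏ j, (k j).factorial = (Fintype.card α).factorial := by
  rw [Nat.card_eq_fintype_card]
  have hγ : Fintype.card (Σ j, Fin (k j)) = Fintype.card α := by simp [hk]
  have h1 : Fintype.card (α ≃ Σ j, Fin (k j)) = (Fintype.card α).factorial :=
    Fintype.card_equiv (Fintype.equivOfCardEq hγ.symm)
  have h2 := (Fintype.card_of_bijective (sigmaRepr_bij (α := α) k)).trans h1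
  rw [Fintype.card_sigma] at h2
  have h3 : ∀ f : α → β, ∀ j : β,
      Fintype.card ({i // f i = j} ≃ Fin (k j)) =
        if (univ.filter fun i => f i = j).card = k j then (k j).factorial else 0 := by
    intro f j
    by_cases h : (univ.filter fun i => f i = j).card = k j
    · rw [if_pos h]
      have hc : Fintype.card {i // f i = j} = Fintype.card (Fin (k j)) := by
        rw [Fintype.card_subtype, h, Fintype.card_fin]
      rw [Fintype.card_equiv (Fintype.equivOfCardEq hc), hc, Fintype.card_fin]
    · rw [if_neg h]
      refine Fintype.card_eq_zero_iff.mpr ⟨fun E => h ?_⟩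
      have := Fintype.card_congr E
      rwa [Fintype.card_subtype, Fintype.card_fin] at this
  calc Fintype.card {f : α → β // ∀ j, (univ.filter fun i => f i = j).card = k j}
        * ∏ j, (k j).factorial
      = ∑ f : α → β, if (∀ j, (univ.filter fun i => f i = j).card = k j)
          then ∏ j, (k j).factorial else 0 := by
        rw [Finset.sum_ite, Finset.sum_const_zero, add_zero, Finset.sum_const,
          Fintype.card_subtype, smul_eq_mul]
    _ = ∑ f : α → β, ∏ j, Fintype.card ({i // f i = j} ≃ Fin (k j)) := by
        refine Finset.sum_congr rfl fun f _ => ?_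
        rw [Finset.prod_congr rfl fun j _ => h3 f j, Finset.prod_ite_zero]
        simp
    _ = (Fintype.card α).factorial := by rw [← h2]; simp [Fintype.card_pi]


variable {n : ℕ}

theorem mem_fiber (j : Fin n) (i : Fin (2 * n)) :
    sortedWordTwo n i = j ↔ (i : ℕ) = 2 * j ∨ (i : ℕ) = 2 * j + 1 := by
  simp only [sortedWordTwo, Fin.ext_iff]
  omega

theorem fiber_card (j : Fin n) :
    (univ.filter fun i => sortedWordTwo n i = j).card = 2 := by
  have hj := j.isLt
  have : (univ.filter fun i => sortedWordTwo n i = j) =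
      {⟨2 * j, by omega⟩, ⟨2 * j + 1, by omega⟩} := by
    ext i
    simp only [mem_filter, mem_univ, true_and, mem_insert, mem_singleton, Fin.ext_iff,
      sortedWordTwo]
    omega
  rw [this, card_insert_of_notMem (by simp [Fin.ext_iff]), card_singleton]

/-- number of positions of symbol `j` lying in `S` -/
def sc (S : Finset (Fin (2 * n))) (j : Fin n) : ℕ :=
  (S.filter fun i => sortedWordTwo n i = j).card

theorem sc_le (S : Finset (Fin (2 * n))) (j : Fin n) : sc S j ≤ 2 := by
  rw [← fiber_card j]
  exact card_le_card (filter_subset_filter _ (subset_univ S))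

theorem sum_sc (S : Finset (Fin (2 * n))) : ∑ j, sc S j = S.card :=
  (Finset.card_eq_sum_card_fiberwise (f := sortedWordTwo n) (fun x _ => mem_univ _)).symm

theorem sum_two_sub_sc (S : Finset (Fin (2 * n))) :
    ∑ j, (2 - sc S j) = 2 * n - S.card := by
  have h1 : ∑ j, ((2 - sc S j) + sc S j) = 2 * n := by
    have he : ∀ j : Fin n, (2 - sc S j) + sc S j = 2 := fun j => by have := sc_le S j; omega
    simp [he, mul_comm]
  rw [Finset.sum_add_distrib, sum_sc] at h1
  have h2 : S.card ≤ 2 * n := by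
    simpa using Finset.card_le_card (subset_univ S)
  omega

theorem subtype_filter_card (S : Finset (Fin (2 * n))) (p : Fin (2 * n) → Prop)
    [DecidablePred p] :
    (univ.filter fun i : {i : Fin (2 * n) // i ∉ S} => p i.1).card
      = (univ.filter fun i => i ∉ S ∧ p i).card := by
  rw [← Fintype.card_subtype, ← Fintype.card_subtype]
  exact Fintype.card_congr (Equiv.subtypeSubtypeEquivSubtypeInter _ _)

theorem fiber_split (S : Finset (Fin (2 * n))) (f : Fin (2 * n) → Fin n)
    (hf : ∀ i ∈ S, f i = sortedWordTwo n i) (j : Fin n) :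
    (univ.filter fun i => f i = j).card
      = sc S j + (univ.filter fun i : {i : Fin (2 * n) // i ∉ S} => f i.1 = j).card := by
  have hsplit := Finset.card_filter_add_card_filter_not
    (s := univ.filter fun i => f i = j) (p := fun i => i ∈ S)
  have h1 : (univ.filter fun i => f i = j).filter (fun i => i ∈ S)
      = S.filter fun i => sortedWordTwo n i = j := by
    ext i
    simp only [mem_filter, mem_univ, true_and]
    constructor
    · rintro ⟨h2, h3⟩; exact ⟨h3, by rw [← hf i h3, h2]⟩
    · rintro ⟨h2, h3⟩; exact ⟨by rw [hf i h2, h3], h2⟩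
  have h2 : (univ.filter fun i : {i : Fin (2 * n) // i ∉ S} => f i.1 = j).card
      = ((univ.filter fun i => f i = j).filter (fun i => ¬ i ∈ S)).card := by
    rw [subtype_filter_card S (fun x => f x = j), filter_filter]
    congr 1
    ext i
    simp [and_comm]
  rw [h1] at hsplit
  rw [h2]
  have hsc : sc S j = (S.filter fun i => sortedWordTwo n i = j).card := rfl
  omega

noncomputable def AC (S : Finset (Fin (2 * n))) : ℕ :=
  Nat.card {f : Fin (2 * n) → Fin n //
    (∀ j, (univ.filter fun i => f i = j).card = 2) ∧ ∀ i ∈ S, f i = sortedWordTwo n i}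

def restrictEquiv (S : Finset (Fin (2 * n))) :
    {f : Fin (2 * n) → Fin n //
      (∀ j, (univ.filter fun i => f i = j).card = 2) ∧ ∀ i ∈ S, f i = sortedWordTwo n i}
    ≃ {g : {i : Fin (2 * n) // i ∉ S} → Fin n //
        ∀ j, (univ.filter fun i => g i = j).card = 2 - sc S j} where
  toFun f := ⟨fun i => f.1 i.1, by
    intro j
    show (univ.filter fun i : {i : Fin (2 * n) // i ∉ S} => f.1 i.1 = j).card = 2 - sc S j
    have h1 := fiber_split S f.1 f.2.2 j
    have h2 := f.2.1 j
    have h3 := sc_le S j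
    omega⟩
  invFun g := ⟨fun i => if h : i ∈ S then sortedWordTwo n i else g.1 ⟨i, h⟩, by
    constructor
    · intro j
      have hf : ∀ i ∈ S, (fun i => if h : i ∈ S then sortedWordTwo n i else g.1 ⟨i, h⟩) i
          = sortedWordTwo n i := fun i hi => dif_pos hi
      rw [fiber_split S _ hf j]
      beta_reduce
      have h4 : (univ.filter fun i : {i : Fin (2 * n) // i ∉ S} =>
          (if h : i.1 ∈ S then sortedWordTwo n i.1 else g.1 ⟨i.1, h⟩) = j)
          = univ.filter fun i : {i : Fin (2 * n) // i ∉ S} => g.1 i = j := by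
        refine filter_congr fun i _ => ?_
        rw [dif_neg i.2]
      rw [h4, g.2 j]
      have h3 := sc_le S j
      omega
    · intro i hi
      exact dif_pos hi⟩
  left_inv f := by
    apply Subtype.ext
    funext i
    by_cases h : i ∈ S
    · simp only [dif_pos h]
      exact (f.2.2 i h).symm
    · simp only [dif_neg h]
  right_inv g := by
    apply Subtype.ext
    funext i
    simp only [dif_neg i.2]

theorem AC_mul (S : Finset (Fin (2 * n))) :
    AC S * ∏ j, (2 - sc S j).factorial = (2 * n - S.card).factorial
 := by
  have hcard : Fintype.card {i : Fin (2 * n) // i ∉ S} = 2 * n - S.card := by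
    rw [Fintype.card_subtype]
    have h : (univ.filter fun i : Fin (2 * n) => i ∉ S) = univ \ S := by ext i; simp
    rw [h, card_sdiff_of_subset (subset_univ S), card_univ, Fintype.card_fin]
  have hk : ∑ j, (2 - sc S j) = Fintype.card {i : Fin (2 * n) // i ∉ S} := by
    rw [hcard]; exact sum_two_sub_sc S
  have key := card_fiber_count (α := {i : Fin (2 * n) // i ∉ S}) (k := fun j => 2 - sc S j) hk
  rw [hcard] at key
  have h5 : AC S = Nat.card {f : {i : Fin (2 * n) // i ∉ S} → Fin n //
      ∀ j, (univ.filter fun i => f i = j).card = (fun j => 2 - sc S j) j} := by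
    rw [AC]
    exact Nat.card_congr ((restrictEquiv S).trans (Equiv.subtypeEquivRight fun g => by simp))
  rw [h5]
  exact key

theorem AC_card (S : Finset (Fin (2 * n))) :
    AC S = ((univ.filter fun f : Fin (2 * n) → Fin n =>
        ∀ j, (univ.filter fun i => f i = j).card = 2).filter
      fun f => ∀ i ∈ S, f i = sortedWordTwo n i).card := by
  rw [AC, Nat.card_eq_fintype_card, Fintype.card_subtype, filter_filter]

theorem incl_excl :
    (multisetDerangementCount (sortedWordTwo n) : ℝ)
      = ∑ S ∈ (univ : Finset (Fin (2 * n))).powerset, (-1 : ℝ) ^ S.card * AC S := by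
  classical
  have hM : multisetDerangementCount (sortedWordTwo n)
      = ((univ.filter fun f : Fin (2 * n) → Fin n =>
            ∀ j, (univ.filter fun i => f i = j).card = 2).filter
          fun f => ∀ i, f i ≠ sortedWordTwo n i).card := by
    rw [multisetDerangementCount, Fintype.card_subtype, filter_filter]
    congr 1
    ext f
    simp [fiber_card]
  have hf : ∀ f : Fin (2 * n) → Fin n, (if (∀ i, f i ≠ sortedWordTwo n i) then (1 : ℝ) else 0)
      = ∑ S ∈ (univ : Finset (Fin (2 * n))).powerset,
          (-1 : ℝ) ^ S.card * (if (∀ i ∈ S, f i = sortedWordTwo n i) then (1 : ℝ) else 0) := by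
    intro f
    calc (if (∀ i, f i ≠ sortedWordTwo n i) then (1 : ℝ) else 0)
        = ∏ i, ((-(if f i = sortedWordTwo n i then (1 : ℝ) else 0)) + 1) := by
          rw [Finset.prod_congr rfl (g := fun i => if f i = sortedWordTwo n i then (0:ℝ) else 1)
            (fun i _ => by by_cases h : f i = sortedWordTwo n i <;> simp [h])]
          rw [Finset.prod_congr rfl
            (g := fun i => if ¬ (f i = sortedWordTwo n i) then (1:ℝ) else 0)
            (fun i _ => by by_cases h : f i = sortedWordTwo n i <;> simp [h])]
          rw [Finset.prod_boole]
          simp [Ne]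
      _ = ∑ S ∈ (univ : Finset (Fin (2 * n))).powerset,
            (∏ i ∈ S, -(if f i = sortedWordTwo n i then (1 : ℝ) else 0)) * ∏ i ∈ univ \ S, 1 :=
          Finset.prod_add _ _ _
      _ = ∑ S ∈ (univ : Finset (Fin (2 * n))).powerset,
          (-1 : ℝ) ^ S.card * (if (∀ i ∈ S, f i = sortedWordTwo n i) then (1 : ℝ) else 0) := by
          refine Finset.sum_congr rfl fun S _ => ?_
          rw [Finset.prod_const_one, mul_one]
          rw [Finset.prod_congr rfl
            (g := fun i => (-1 : ℝ) * (if f i = sortedWordTwo n i then (1 : ℝ) else 0))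
            (fun i _ => by ring)]
          rw [Finset.prod_mul_distrib, Finset.prod_const, Finset.prod_boole]
          by_cases h : ∀ i ∈ S, f i = sortedWordTwo n i <;> simp [h]
  rw [hM]
  calc ((((univ.filter fun f : Fin (2 * n) → Fin n =>
            ∀ j, (univ.filter fun i => f i = j).card = 2).filter
          fun f => ∀ i, f i ≠ sortedWordTwo n i).card : ℕ) : ℝ)
      = ∑ f ∈ (univ.filter fun f : Fin (2 * n) → Fin n =>
            ∀ j, (univ.filter fun i => f i = j).card = 2).filter
          fun f => ∀ i, f i ≠ sortedWordTwo n i, (1 : ℝ) := by simp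
    _ = ∑ f ∈ univ.filter fun f : Fin (2 * n) → Fin n =>
            ∀ j, (univ.filter fun i => f i = j).card = 2,
          (if (∀ i, f i ≠ sortedWordTwo n i) then (1 : ℝ) else 0) := Finset.sum_filter _ _
    _ = ∑ f ∈ univ.filter fun f : Fin (2 * n) → Fin n =>
            ∀ j, (univ.filter fun i => f i = j).card = 2,
          ∑ S ∈ (univ : Finset (Fin (2 * n))).powerset,
            (-1 : ℝ) ^ S.card * (if (∀ i ∈ S, f i = sortedWordTwo n i) then (1 : ℝ) else 0) :=
        Finset.sum_congr rfl fun f _ => hf f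
    _ = ∑ S ∈ (univ : Finset (Fin (2 * n))).powerset, (-1 : ℝ) ^ S.card *
          ∑ f ∈ univ.filter fun f : Fin (2 * n) → Fin n =>
            ∀ j, (univ.filter fun i => f i = j).card = 2,
            (if (∀ i ∈ S, f i = sortedWordTwo n i) then (1 : ℝ) else 0) := by
        rw [Finset.sum_comm]
        exact Finset.sum_congr rfl fun S _ => (Finset.mul_sum _ _ _).symm
    _ = ∑ S ∈ (univ : Finset (Fin (2 * n))).powerset, (-1 : ℝ) ^ S.card * AC S := by
        refine Finset.sum_congr rfl fun S _ => ?_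
        congr 1
        rw [← Finset.sum_filter, AC_card]
        simp

theorem integral_exp_pow (m : ℕ) :
    ∫ x in Set.Ioi (0:ℝ), Real.exp (-x) * x ^ m = (Nat.factorial m : ℝ) := by
  have h := Real.Gamma_eq_integral (s := (m : ℝ) + 1) (by positivity)
  have hfun : (fun x : ℝ => Real.exp (-x) * x ^ ((m : ℝ) + 1 - 1)) =
      fun x : ℝ => Real.exp (-x) * x ^ m := by
    funext x
    rw [add_sub_cancel_right, Real.rpow_natCast]
  rw [hfun] at h
  rw [← h, Real.Gamma_nat_eq_factorial]

theorem integrable_exp_pow (m : ℕ) :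
    MeasureTheory.IntegrableOn (fun x : ℝ => Real.exp (-x) * x ^ m) (Set.Ioi 0) := by
  have h := Real.GammaIntegral_convergent (s := (m : ℝ) + 1) (by positivity)
  have hfun : (fun x : ℝ => Real.exp (-x) * x ^ ((m : ℝ) + 1 - 1)) =
      fun x : ℝ => Real.exp (-x) * x ^ m := by
    funext x
    rw [add_sub_cancel_right, Real.rpow_natCast]
  rwa [hfun] at h

theorem powerset_sum_L (P : Finset (Fin (2 * n))) (hP : P.card = 2) (x : ℝ) :
    ∑ T ∈ P.powerset, (-1 : ℝ) ^ T.card * x ^ (2 - T.card) / (Nat.factorial (2 - T.card) : ℝ)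
      = laguerre 2 x := by
  rw [Finset.sum_powerset, hP]
  rw [Finset.sum_congr rfl (fun k hk => Finset.sum_congr rfl
    (fun T hT => by rw [(Finset.mem_powersetCard.mp hT).2]))]
  rw [Finset.sum_congr rfl (fun k _ => by
    rw [Finset.sum_const, Finset.card_powersetCard, hP, nsmul_eq_mul])]
  simp [Finset.sum_range_succ, laguerre, Nat.factorial]
  ring

noncomputable def Cg (g : Fin n → Finset (Fin (2 * n))) : ℝ :=
  ∏ j, ((-1 : ℝ) ^ (g j).card / (Nat.factorial (2 - (g j).card) : ℝ))

def Mg (g : Fin n → Finset (Fin (2 * n))) : ℕ := ∑ j, (2 - (g j).card)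

theorem laguerre_pow_expand (x : ℝ) :
    (laguerre 2 x) ^ n = ∑ g ∈ Fintype.piFinset
        (fun j : Fin n => (univ.filter fun i => sortedWordTwo n i = j).powerset),
      Cg g * x ^ Mg g := by
  calc (laguerre 2 x) ^ n = ∏ _j : Fin n, laguerre 2 x := by
        rw [Finset.prod_const, Finset.card_univ, Fintype.card_fin]
    _ = ∏ j : Fin n, ∑ T ∈ (univ.filter fun i => sortedWordTwo n i = j).powerset,
          (-1 : ℝ) ^ T.card * x ^ (2 - T.card) / (Nat.factorial (2 - T.card) : ℝ) :=
        Finset.prod_congr rfl fun j _ => (powerset_sum_L _ (fiber_card j) x).symm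
    _ = ∑ g ∈ Fintype.piFinset
          (fun j : Fin n => (univ.filter fun i => sortedWordTwo n i = j).powerset),
        ∏ j, (-1 : ℝ) ^ (g j).card * x ^ (2 - (g j).card)
          / (Nat.factorial (2 - (g j).card) : ℝ) := Finset.prod_univ_sum _ _
    _ = _ := by
        refine Finset.sum_congr rfl fun g _ => ?_
        rw [Cg, Mg, ← Finset.prod_pow_eq_pow_sum, ← Finset.prod_mul_distrib]
        exact Finset.prod_congr rfl fun j _ => by ring

theorem biUnion_filter_eq (g : Fin n → Finset (Fin (2 * n)))
    (hg : ∀ j, g j ⊆ univ.filter fun i => sortedWordTwo n i = j) (j : Fin n) :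
    (univ.biUnion g).filter (fun i => sortedWordTwo n i = j) = g j := by
  ext i
  simp only [Finset.mem_filter, Finset.mem_biUnion, Finset.mem_univ, true_and]
  constructor
  · rintro ⟨⟨j', hj'⟩, hw⟩
    have := (Finset.mem_filter.mp (hg j' hj')).2
    exact (this.symm.trans hw) ▸ hj'
  · intro hi
    exact ⟨⟨j, hi⟩, (Finset.mem_filter.mp (hg j hi)).2⟩

theorem value_eq (g : Fin n → Finset (Fin (2 * n)))
    (hg : ∀ j, g j ⊆ univ.filter fun i => sortedWordTwo n i = j) :
    Cg g * (Nat.factorial (Mg g) : ℝ)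
      = (-1 : ℝ) ^ (univ.biUnion g).card * AC (univ.biUnion g) := by
  set S := univ.biUnion g with hS
  have hsc : ∀ j, sc S j = (g j).card := fun j => by
    rw [sc, hS, biUnion_filter_eq g hg j]
  have hM : Mg g = 2 * n - S.card := by
    rw [Mg, ← sum_two_sub_sc S]
    exact Finset.sum_congr rfl fun j _ => by rw [hsc j]
  have hsign : ((-1 : ℝ)) ^ S.card = ∏ j, (-1 : ℝ) ^ (g j).card := by
    rw [Finset.prod_pow_eq_pow_sum]
    congr 1
    rw [← sum_sc S]
    exact Finset.sum_congr rfl fun j _ => hsc j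
  have hCg : Cg g = (∏ j, (-1 : ℝ) ^ (g j).card)
      / (∏ j, (Nat.factorial (2 - sc S j) : ℝ)) := by
    rw [Cg, Finset.prod_div_distrib]
    congr 1
    exact Finset.prod_congr rfl fun j _ => by rw [hsc j]
  have hprodne : (∏ j, (Nat.factorial (2 - sc S j) : ℝ)) ≠ 0 :=
    Finset.prod_ne_zero_iff.mpr fun j _ => Nat.cast_ne_zero.mpr (Nat.factorial_ne_zero _)
  have hfac : ((AC S : ℝ)) * (∏ j, (Nat.factorial (2 - sc S j) : ℝ))
      = (Nat.factorial (2 * n - S.card) : ℝ) := by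
    have := AC_mul S
    push_cast [← this]
    ring
  rw [hCg, hM, hsign, div_mul_eq_mul_div, div_eq_iff hprodne, ← hfac]
  ring

theorem integral_side :
    (∫ x in Set.Ioi (0 : ℝ), Real.exp (-x) * (laguerre 2 x) ^ n)
      = ∑ S ∈ (univ : Finset (Fin (2 * n))).powerset, (-1 : ℝ) ^ S.card * AC S := by
  have hfun : (fun x : ℝ => Real.exp (-x) * (laguerre 2 x) ^ n)
      = fun x : ℝ => ∑ g ∈ Fintype.piFinset
          (fun j : Fin n => (univ.filter fun i => sortedWordTwo n i = j).powerset),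
        Real.exp (-x) * (Cg g * x ^ Mg g) :=
    funext fun x => by rw [laguerre_pow_expand, Finset.mul_sum]
  have hintg : ∀ g : Fin n → Finset (Fin (2 * n)),
      MeasureTheory.IntegrableOn (fun x : ℝ => Real.exp (-x) * (Cg g * x ^ Mg g))
        (Set.Ioi 0) := by
    intro g
    have h1 := (integrable_exp_pow (Mg g)).const_mul (Cg g)
    have heq : (fun x : ℝ => Cg g * (Real.exp (-x) * x ^ Mg g))
        = fun x : ℝ => Real.exp (-x) * (Cg g * x ^ Mg g) := funext fun x => by ring
    rwa [heq] at h1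
  have hint : ∀ g : Fin n → Finset (Fin (2 * n)),
      (∫ x in Set.Ioi (0 : ℝ), Real.exp (-x) * (Cg g * x ^ Mg g))
        = Cg g * (Nat.factorial (Mg g) : ℝ) := by
    intro g
    have heq : (fun x : ℝ => Real.exp (-x) * (Cg g * x ^ Mg g))
        = fun x : ℝ => Cg g * (Real.exp (-x) * x ^ Mg g) := funext fun x => by ring
    rw [heq, MeasureTheory.integral_const_mul, integral_exp_pow]
  calc (∫ x in Set.Ioi (0 : ℝ), Real.exp (-x) * (laguerre 2 x) ^ n)
      = ∑ g ∈ Fintype.piFinset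
          (fun j : Fin n => (univ.filter fun i => sortedWordTwo n i = j).powerset),
        ∫ x in Set.Ioi (0 : ℝ), Real.exp (-x) * (Cg g * x ^ Mg g) := by
        rw [hfun]
        exact MeasureTheory.integral_finset_sum _ fun g _ => hintg g
    _ = ∑ g ∈ Fintype.piFinset
          (fun j : Fin n => (univ.filter fun i => sortedWordTwo n i = j).powerset),
        Cg g * (Nat.factorial (Mg g) : ℝ) := Finset.sum_congr rfl fun g _ => hint g
    _ = ∑ S ∈ (univ : Finset (Fin (2 * n))).powerset, (-1 : ℝ) ^ S.card * AC S := by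
        refine Finset.sum_nbij' (i := fun g => univ.biUnion g)
          (j := fun S => fun j => S.filter fun i => sortedWordTwo n i = j)
          (fun g _ => Finset.mem_powerset.mpr (Finset.subset_univ _))
          (fun S _ => Fintype.mem_piFinset.mpr fun j =>
            Finset.mem_powerset.mpr (Finset.filter_subset_filter _ (Finset.subset_univ S)))
          (fun g hg => funext fun j => biUnion_filter_eq g
            (fun j' => Finset.mem_powerset.mp (Fintype.mem_piFinset.mp hg j')) j)
          (fun S _ => by
            ext i
            simp only [Finset.mem_biUnion, Finset.mem_univ, true_and, Finset.mem_filter]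
            exact ⟨fun ⟨j, hj, _⟩ => hj, fun hi => ⟨sortedWordTwo n i, hi, rfl⟩⟩)
          (fun g hg => value_eq g
            (fun j' => Finset.mem_powerset.mp (Fintype.mem_piFinset.mp hg j')))

end AuxEvenGillis

theorem even_gillis_two_of_each :
    (∀ n : ℕ, (multisetDerangementCount (sortedWordTwo n) : ℝ) =
        ∫ x in Set.Ioi (0 : ℝ), Real.exp (-x) * (laguerre 2 x) ^ n) ∧
    multisetDerangementCount (sortedWordTwo 3) = 10 := by
  constructor
  · intro n
    rw [incl_excl, integral_side]
  · decide
end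

section
/- The Franel numbers f_k = Σ_{j=0}^{k} C(k,j)^3 satisfy the recurrence (k+1)² f_{k+1} = (7k² + 7k + 2) f_k + 8 k² f_{k-1} for k ≥ 1, with f_0 = 1 and f_1 = 2. -/
/-- The Franel numbers. -/
def franel (k : ℕ) : ℕ := ∑ j ∈ Finset.range (k + 1), (Nat.choose k j) ^ 3

/-- Ratio identity for binomial coefficients over ℚ, valid for all naturals. -/
lemma choose_ratio (m j : ℕ) :
    ((j : ℚ) + 1) * (m.choose (j + 1)) = ((m : ℚ) - j) * m.choose j := by
  rcases lt_trichotomy j m with h | h | h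
  · have := Nat.choose_succ_right_eq m j
    have hcast : ((m.choose (j+1) * (j+1) : ℕ) : ℚ) = ((m.choose j * (m - j) : ℕ) : ℚ) := by
      exact_mod_cast congrArg (Nat.cast : ℕ → ℚ) this
    push_cast [Nat.cast_sub h.le] at hcast
    linarith [hcast]
  · subst h
    simp [Nat.choose_eq_zero_of_lt (Nat.lt_succ_self j)]
  · rw [Nat.choose_eq_zero_of_lt h, Nat.choose_eq_zero_of_lt (h.trans (Nat.lt_succ_self j))]
    simp

/-- The WZ-style certificate for the Franel recurrence. -/
def gcert (n : ℕ) : ℕ → ℚ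
  | 0 => 0
  | (k + 1) => 4 * n ^ 2 * ((n - 1).choose (k - 1)) ^ 3 * (if k = 0 then 0 else 1)
      + (27 * n * k - 14 * n ^ 2 - 5 * n - 18 * k ^ 2 + 3 * k - 1) * (n.choose k) ^ 3

lemma gcert_zero (n : ℕ) : gcert n 0 = 0 := rfl

lemma gcert_one (n : ℕ) : gcert n 1 = -(14 * n ^ 2 + 5 * n + 1) := by
  simp [gcert]
  ring

lemma gcert_two (n : ℕ) (k : ℕ) : gcert n (k + 2) =
    4 * n ^ 2 * ((n - 1).choose k) ^ 3
      + (27 * n * (k + 1) - 14 * n ^ 2 - 5 * n - 18 * ((k:ℚ) + 1) ^ 2 + 3 * (k + 1) - 1)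
        * (n.choose (k + 1)) ^ 3 := by
  simp only [gcert, Nat.add_eq_zero, and_false, if_false, Nat.add_sub_cancel, one_ne_zero,
    mul_one]
  push_cast
  ring

/-- Termwise certificate identity. -/
lemma termwise (m k : ℕ) :
    ((m : ℚ) + 2) ^ 2 * ((m + 2).choose k) ^ 3 =
      (7 * ((m:ℚ) + 1) ^ 2 + 7 * ((m:ℚ) + 1) + 2) * ((m + 1).choose k) ^ 3
        + 8 * ((m:ℚ) + 1) ^ 2 * (m.choose k) ^ 3
        + (gcert (m + 1) (k + 1) - gcert (m + 1) k) := by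
  match k with
  | 0 =>
      simp [gcert_zero, gcert_one]
      push_cast
      ring
  | 1 =>
      have h2 : gcert (m+1) 2 = 4 * ((m:ℚ)+1) ^ 2 * ((m + 1 - 1).choose 0) ^ 3
          + (27 * ((m:ℚ)+1) * 1 - 14 * ((m:ℚ)+1) ^ 2 - 5 * ((m:ℚ)+1) - 18 * ((0:ℚ) + 1) ^ 2
              + 3 * ((0:ℚ) + 1) - 1) * ((m+1).choose 1) ^ 3 := by
        have := gcert_two (m+1) 0
        push_cast at this ⊢
        convert this using 2 <;> push_cast <;> ring
      rw [h2, gcert_one]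
      simp [Nat.choose_one_right]
      push_cast
      ring
  | (j + 2) =>
      have hA : (m + 1 - 1) = m := rfl
      have hg1 : gcert (m+1) (j + 3) = 4 * ((m:ℚ)+1) ^ 2 * (m.choose (j+1)) ^ 3
          + (27 * ((m:ℚ)+1) * ((j:ℚ)+2) - 14 * ((m:ℚ)+1) ^ 2 - 5 * ((m:ℚ)+1)
              - 18 * ((j:ℚ) + 2) ^ 2 + 3 * ((j:ℚ) + 2) - 1) * ((m+1).choose (j+2)) ^ 3 := by
        have := gcert_two (m+1) (j+1)
        rw [hA] at this
        rw [show j + 3 = (j+1) + 2 by ring] at *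
        rw [this]; push_cast; ring
      have hg0 : gcert (m+1) (j + 2) = 4 * ((m:ℚ)+1) ^ 2 * (m.choose j) ^ 3
          + (27 * ((m:ℚ)+1) * ((j:ℚ)+1) - 14 * ((m:ℚ)+1) ^ 2 - 5 * ((m:ℚ)+1)
              - 18 * ((j:ℚ) + 1) ^ 2 + 3 * ((j:ℚ) + 1) - 1) * ((m+1).choose (j+1)) ^ 3 := by
        have := gcert_two (m+1) j
        rw [hA] at this
        rw [this]; push_cast; ring
      rw [hg1, hg0]
      -- Pascal expansions
      have p1 : ((m+1).choose (j+1) : ℚ) = (m.choose j : ℚ) + (m.choose (j+1) : ℚ) := by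
        rw [Nat.choose_succ_succ]; push_cast; ring
      have p2 : ((m+1).choose (j+2) : ℚ) = (m.choose (j+1) : ℚ) + (m.choose (j+2) : ℚ) := by
        rw [Nat.choose_succ_succ]; push_cast; ring
      have p3n : (m+2).choose (j+2) = (m+1).choose (j+1) + (m+1).choose (j+2) :=
        Nat.choose_succ_succ' (m+1) (j+1)
      have p3 : ((m+2).choose (j+2) : ℚ)
          = (m.choose j : ℚ) + 2 * (m.choose (j+1) : ℚ) + (m.choose (j+2) : ℚ) := by
        rw [p3n, Nat.choose_succ_succ' m j, Nat.choose_succ_succ' m (j+1)]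
        push_cast; ring
      set A := (m.choose j : ℚ)
      set B := (m.choose (j+1) : ℚ)
      set C := (m.choose (j+2) : ℚ)
      have hB : ((j:ℚ) + 1) * B = ((m:ℚ) - j) * A := choose_ratio m j
      have hC : ((j:ℚ) + 2) * C = ((m:ℚ) - j - 1) * B := by
        have := choose_ratio m (j+1)
        push_cast at this
        convert this using 2 <;> ring
      have hj1 : ((j:ℚ) + 1) ≠ 0 := by positivity
      have hj2 : ((j:ℚ) + 2) ≠ 0 := by positivity
      have hBv : B = ((m:ℚ) - j) * A / ((j:ℚ) + 1) := by
        field_simp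
        linarith [hB]
      have hCv : C = ((m:ℚ) - j - 1) * B / ((j:ℚ) + 2) := by
        field_simp
        linarith [hC]
      rw [p1, p2, p3, hCv, hBv]
      field_simp
      ring

lemma franel_cast_sum (n N : ℕ) (h : n + 1 ≤ N) :
    ∑ k ∈ Finset.range N, ((n.choose k : ℚ)) ^ 3 = (franel n : ℚ) := by
  rw [franel]
  push_cast
  rw [← Finset.sum_range_add_sum_Ico _ h]
  have : ∑ k ∈ Finset.Ico (n+1) N, ((n.choose k : ℚ)) ^ 3 = 0 := by
    apply Finset.sum_eq_zero
    intro k hk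
    rw [Finset.mem_Ico] at hk
    rw [Nat.choose_eq_zero_of_lt hk.1]
    norm_num
  rw [this, add_zero]

theorem franel_recurrence :
    franel 0 = 1 ∧ franel 1 = 2 ∧
    ∀ k : ℕ, 1 ≤ k →
      (k + 1) ^ 2 * franel (k + 1) =
        (7 * k ^ 2 + 7 * k + 2) * franel k + 8 * k ^ 2 * franel (k - 1) := by
  refine ⟨by decide, by decide, ?_⟩
  intro k hk
  obtain ⟨m, rfl⟩ : ∃ m, k = m + 1 := ⟨k - 1, (Nat.succ_pred_eq_of_pos hk).symm⟩
  have key : (((m:ℚ) + 1 + 1) ^ 2) * (franel (m + 2) : ℚ) =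
      (7 * ((m:ℚ)+1) ^ 2 + 7 * ((m:ℚ)+1) + 2) * (franel (m+1) : ℚ)
        + 8 * ((m:ℚ)+1) ^ 2 * (franel m : ℚ) := by
    have sum_eq : ∑ k ∈ Finset.range (m + 3),
        (((m : ℚ) + 2) ^ 2 * ((m + 2).choose k) ^ 3) =
        ∑ k ∈ Finset.range (m + 3),
          ((7 * ((m:ℚ) + 1) ^ 2 + 7 * ((m:ℚ) + 1) + 2) * ((m + 1).choose k) ^ 3
            + 8 * ((m:ℚ) + 1) ^ 2 * (m.choose k) ^ 3
            + (gcert (m + 1) (k + 1) - gcert (m + 1) k)) :=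
      Finset.sum_congr rfl (fun k _ => termwise m k)
    rw [← Finset.mul_sum, franel_cast_sum (m+2) (m+3) (by omega)] at sum_eq
    simp only [Finset.sum_add_distrib, ← Finset.mul_sum,
      franel_cast_sum (m+1) (m+3) (by omega), franel_cast_sum m (m+3) (by omega),
      Finset.sum_range_sub (fun k => gcert (m+1) k)] at sum_eq
    have gtop : gcert (m+1) (m+3) = 0 := by
      rw [show m + 3 = (m+1) + 2 by ring, gcert_two]
      rw [show (m + 1 - 1) = m from rfl, Nat.choose_eq_zero_of_lt (by omega),
        Nat.choose_eq_zero_of_lt (by omega)]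
      norm_num
    rw [gtop, gcert_zero, sub_zero, add_zero] at sum_eq
    push_cast
    push_cast at sum_eq
    linarith [sum_eq]
  have : ((m:ℚ) + 1 + 1) ^ 2 * (franel (m + 2) : ℚ) =
      ((7 * (m+1) ^ 2 + 7 * (m+1) + 2 : ℕ) : ℚ) * (franel (m+1) : ℚ)
        + ((8 * (m+1) ^ 2 : ℕ) : ℚ) * (franel m : ℚ) := by
    push_cast
    linarith [key]
  have final : (((m + 1 + 1) ^ 2 * franel (m + 2) : ℕ) : ℚ)
      = (((7 * (m+1) ^ 2 + 7 * (m+1) + 2) * franel (m+1) + 8 * (m+1) ^ 2 * franel m : ℕ) : ℚ) := by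
    push_cast
    push_cast at this
    linarith [this]
  have final2 := Nat.cast_injective (R := ℚ) final
  simp only [Nat.add_sub_cancel]
  convert final2 using 2
end
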